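/- Let p : ℕ → ℝ be nonnegative with ∑'_{k} p k = 1, and let c₁, c₂ > 0 be constants such that p k ≤ c₂ · k^(−3/2) for every k ≥ 1. Fix n ≥ 1 and assume p n ≥ c₁ · n^(−3/2). Then (∑'_{k} min(k, n) · p k) / p n ≤ (4 · c₂ / c₁) · n². -/

import Mathlib

/-- Telescoping majorant: `F n k = 2√(min k n) + 2√n − 2n/√(max k n)`. -/
noncomputable def auxF (n k : ℕ) : ℝ :=
  2 * Real.sqrt (min k n) + 2 * Real.sqrt n - 2 * n / Real.sqrt (max k n)

lemma aux_div {n : ℕ} (hn : 1 ≤ n) : (n:ℝ) / Real.sqrt n = Real.sqrt n := by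
  have hn0 : (0:ℝ) < n := by exact_mod_cast hn
  rw [eq_comm, eq_div_iff (by positivity), Real.mul_self_sqrt hn0.le]

lemma auxF_of_le {n k : ℕ} (hn : 1 ≤ n) (hk : k ≤ n) :
    auxF n k = 2 * Real.sqrt k := by
  unfold auxF
  rw [min_eq_left (show (k:ℝ) ≤ (n:ℝ) by exact_mod_cast hk),
      max_eq_right (show (k:ℝ) ≤ (n:ℝ) by exact_mod_cast hk), mul_div_assoc, aux_div hn]
  ring

lemma auxF_of_ge {n k : ℕ} (hk : n ≤ k) :
    auxF n k = 4 * Real.sqrt n - 2 * n / Real.sqrt k := by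
  unfold auxF
  rw [min_eq_right (show (n:ℝ) ≤ (k:ℝ) by exact_mod_cast hk),
      max_eq_left (show (n:ℝ) ≤ (k:ℝ) by exact_mod_cast hk)]
  ring

lemma auxF_zero {n : ℕ} (hn : 1 ≤ n) : auxF n 0 = 0 := by
  rw [auxF_of_le hn (Nat.zero_le n)]
  simp

lemma auxF_le {n : ℕ} (hn : 1 ≤ n) (k : ℕ) : auxF n k ≤ 4 * Real.sqrt n := by
  have h1 : Real.sqrt (min k n) ≤ Real.sqrt n :=
    Real.sqrt_le_sqrt (by exact_mod_cast Nat.min_le_right k n)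
  have h2 : 0 ≤ 2 * (n:ℝ) / Real.sqrt (max k n) := by positivity
  unfold auxF; linarith

lemma auxF_telescope {n : ℕ} (hn : 1 ≤ n) (N : ℕ) :
    ∑ k ∈ Finset.range (N+1), (auxF n k - auxF n (k-1)) = auxF n N := by
  induction N with
  | zero => simp [auxF_zero hn]
  | succ m ih => rw [Finset.sum_range_succ, ih]; simp

lemma rpow32 {k : ℕ} (hk : 1 ≤ k) :
    (k : ℝ) ^ (-(3/2) : ℝ) = ((k:ℝ) * Real.sqrt k)⁻¹ := by
  have hk0 : (0:ℝ) < k := by exact_mod_cast hk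
  rw [Real.rpow_neg hk0.le, show (3/2:ℝ) = 1 + 1/2 by norm_num,
    Real.rpow_add hk0, Real.rpow_one, ← Real.sqrt_eq_rpow]

/-- Per-term bound: `min(k,n)·k^{-3/2} ≤ auxF n k − auxF n (k−1)` for `k ≥ 1`. -/
lemma auxF_step {n : ℕ} (hn : 1 ≤ n) {k : ℕ} (hk : 1 ≤ k) :
    ((min k n : ℕ) : ℝ) * (k : ℝ) ^ (-(3/2) : ℝ) ≤ auxF n k - auxF n (k-1) := by
  have hk0 : (0:ℝ) < k := by exact_mod_cast hk
  have hcast : ((k-1 : ℕ) : ℝ) = (k:ℝ) - 1 := by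
    rw [Nat.cast_sub hk]; norm_num
  set a := Real.sqrt ((k-1 : ℕ)) with ha
  set b := Real.sqrt k with hb
  have ha0 : 0 ≤ a := Real.sqrt_nonneg _
  have hb0 : 0 < b := Real.sqrt_pos.mpr hk0
  have hb2 : b ^ 2 = (k:ℝ) := Real.sq_sqrt hk0.le
  have ha2 : a ^ 2 = (k:ℝ) - 1 := by
    rw [ha, Real.sq_sqrt (by exact_mod_cast Nat.zero_le _), hcast]
  have hab : a ≤ b := by
    rw [ha, hb]; exact Real.sqrt_le_sqrt (by rw [hcast]; linarith)
  have hE : (b - a) * (b + a) = 1 := by nlinarith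
  rw [rpow32 hk]
  rcases le_or_gt k n with hkn | hkn
  · -- k ≤ n : reduces to  b⁻¹ ≤ 2(b − a)
    rw [min_eq_left hkn, auxF_of_le hn hkn,
        auxF_of_le hn (le_trans (Nat.sub_le k 1) hkn), ← hb, ← ha]
    have hL : (k:ℝ) * ((k:ℝ) * b)⁻¹ = b⁻¹ := by
      field_simp
    rw [hL, inv_eq_one_div, div_le_iff₀ hb0]
    nlinarith [sq_nonneg (b - a)]
  · -- k > n : reduces to  (b³)⁻¹ ≤ 2(a⁻¹ − b⁻¹)
    have hk2 : 2 ≤ k := by omega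
    have hnk1 : n ≤ k - 1 := Nat.le_sub_one_of_lt hkn
    have ha1 : (1:ℝ) ≤ a := by
      rw [ha]
      have hk2' : (2:ℝ) ≤ (k:ℝ) := by exact_mod_cast hk2
      have : (1:ℝ) ≤ ((k-1:ℕ):ℝ) := by rw [hcast]; linarith
      nlinarith [Real.sq_sqrt (le_trans zero_le_one this),
        Real.sqrt_nonneg ((k-1:ℕ):ℝ)]
    have ha0' : 0 < a := lt_of_lt_of_le one_pos ha1
    rw [min_eq_right hkn.le, auxF_of_ge hkn.le, auxF_of_ge hnk1, ← hb, ← ha]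
    have hgoal : ((k:ℝ) * b)⁻¹ ≤ 2 * (a⁻¹ - b⁻¹) := by
      rw [inv_sub_inv ha0'.ne' hb0.ne', ← hb2, inv_eq_one_div, ← mul_div_assoc,
        div_le_div_iff₀ (by positivity) (by positivity)]
      have h5 : 2*(b-a)*(b^2*b)*(b+a) = 2*(b^2*b) := by linear_combination 2*(b^2*b)*hE
      nlinarith [h5, mul_pos ha0' hb0, sq_nonneg (b-a), mul_pos (mul_pos ha0' hb0) hb0,
        mul_le_mul_of_nonneg_right hab (mul_pos ha0' hb0).le,
        mul_le_mul_of_nonneg_right hab (mul_pos hb0 hb0).le]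
    have hn0 : (0:ℝ) < n := by exact_mod_cast hn
    calc (n:ℝ) * ((k:ℝ) * b)⁻¹ ≤ (n:ℝ) * (2 * (a⁻¹ - b⁻¹)) := by
          exact mul_le_mul_of_nonneg_left hgoal hn0.le
      _ = 4 * Real.sqrt n - 2 * ↑n / b - (4 * Real.sqrt n - 2 * ↑n / a) := by
          field_simp; ring

theorem stmt_12 (p : ℕ → ℝ) (hnn : ∀ k, 0 ≤ p k) (hsum : ∑' k, p k = 1)
    (c₁ c₂ : ℝ) (hc₁ : 0 < c₁) (hc₂ : 0 < c₂)
    (hupper : ∀ k : ℕ, 1 ≤ k → p k ≤ c₂ * (k : ℝ) ^ (-(3 / 2) : ℝ))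
    (n : ℕ) (hn : 1 ≤ n)
    (hlow : c₁ * (n : ℝ) ^ (-(3 / 2) : ℝ) ≤ p n) :
    (∑' k : ℕ, ((min k n : ℕ) : ℝ) * p k) / p n ≤ (4 * c₂ / c₁) * (n : ℝ) ^ 2 := by
  have hn0 : (0:ℝ) < n := by exact_mod_cast hn
  have hpn : 0 < p n := lt_of_lt_of_le (by positivity) hlow
  have hps : Summable p := by
    by_contra h
    rw [tsum_eq_zero_of_not_summable h] at hsum
    norm_num at hsum
  have hterm_nonneg : ∀ k, 0 ≤ ((min k n : ℕ) : ℝ) * p k := fun k =>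
    mul_nonneg (by positivity) (hnn k)
  have hSsum : Summable (fun k => ((min k n : ℕ) : ℝ) * p k) := by
    apply Summable.of_nonneg_of_le hterm_nonneg (fun k => ?_) (hps.mul_left (n:ℝ))
    exact mul_le_mul_of_nonneg_right (by exact_mod_cast Nat.min_le_right k n) (hnn k)
  -- key bound on the numerator
  have key : (∑' k : ℕ, ((min k n : ℕ) : ℝ) * p k) ≤ 4 * c₂ * Real.sqrt n := by
    apply Summable.tsum_le_of_sum_le hSsum
    intro s
    have hsub : s ⊆ Finset.range (s.sup id + 1) := fun x hx =>
      Finset.mem_range.mpr (Nat.lt_succ_of_le (Finset.le_sup (f := id) hx))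
    calc ∑ k ∈ s, ((min k n : ℕ) : ℝ) * p k
        ≤ ∑ k ∈ Finset.range (s.sup id + 1), ((min k n : ℕ) : ℝ) * p k :=
          Finset.sum_le_sum_of_subset_of_nonneg hsub (fun k _ _ => hterm_nonneg k)
      _ ≤ ∑ k ∈ Finset.range (s.sup id + 1), c₂ * (auxF n k - auxF n (k-1)) := by
          apply Finset.sum_le_sum
          intro k _
          rcases Nat.eq_zero_or_pos k with rfl | hk1
          · simp [auxF_zero hn]
          · calc ((min k n : ℕ) : ℝ) * p k
                ≤ ((min k n : ℕ) : ℝ) * (c₂ * (k : ℝ) ^ (-(3/2) : ℝ)) :=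
                  mul_le_mul_of_nonneg_left (hupper k hk1) (by positivity)
              _ = c₂ * (((min k n : ℕ) : ℝ) * (k : ℝ) ^ (-(3/2) : ℝ)) := by ring
              _ ≤ c₂ * (auxF n k - auxF n (k-1)) :=
                  mul_le_mul_of_nonneg_left (auxF_step hn hk1) hc₂.le
      _ = c₂ * auxF n (s.sup id) := by
          rw [← Finset.mul_sum, auxF_telescope hn]
      _ ≤ 4 * c₂ * Real.sqrt n := by
          have := auxF_le hn (s.sup id)
          nlinarith [this, hc₂]
  -- convert to the stated form
  rw [div_le_iff₀ hpn]
  have hrhs : 4 * c₂ * Real.sqrt n ≤ 4 * c₂ / c₁ * (n:ℝ) ^ 2 * p n := by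
    have h1 : 4 * c₂ / c₁ * (n:ℝ) ^ 2 * (c₁ * (n : ℝ) ^ (-(3/2) : ℝ))
        ≤ 4 * c₂ / c₁ * (n:ℝ) ^ 2 * p n :=
      mul_le_mul_of_nonneg_left hlow (by positivity)
    have h2 : 4 * c₂ / c₁ * (n:ℝ) ^ 2 * (c₁ * (n : ℝ) ^ (-(3/2) : ℝ))
        = 4 * c₂ * Real.sqrt n := by
      have hpow : (n:ℝ) ^ 2 * (n : ℝ) ^ (-(3/2) : ℝ) = Real.sqrt n := by
        rw [Real.sqrt_eq_rpow, show ((n:ℝ)^2) = (n:ℝ) ^ (2:ℝ) by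
              rw [← Real.rpow_natCast (n:ℝ) 2]; norm_num,
            ← Real.rpow_add hn0]
        norm_num
      calc 4 * c₂ / c₁ * (n:ℝ) ^ 2 * (c₁ * (n : ℝ) ^ (-(3/2) : ℝ))
          = (c₁ / c₁) * (4 * c₂) * ((n:ℝ) ^ 2 * (n : ℝ) ^ (-(3/2) : ℝ)) := by ring
        _ = 4 * c₂ * Real.sqrt n := by rw [div_self hc₁.ne', hpow, one_mul]
    linarith
  linarith [key, hrhs]
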